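/- Let β₁ ∈ [0,1), let n, l be positive integers with 2^l dividing n, let C ≥ 0 and δ ∈ [0,1], and let (G_s)_{s≥1} be a sequence of m×n real matrices with ‖G_s‖ ≤ C and ‖G_s(I_{n×n} − P^(l))‖ ≤ δ·‖G_s‖ for all s, in Frobenius norm. With G̃_s = G_s·A^(l), M̃_0 = 0, M̃_s = β₁·M̃_{s−1} + (1−β₁)·G̃_s, R_u = G_u − G̃_u·E^(l), and M_u = M̃_u·E^(l) + R_u, the reconstructed first moment satisfies ‖M_u‖ ≤ (1+δ)·C for every u ≥ 1. -/

import Mathlib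

open scoped Matrix

/-- The fold matrix `A^(l) ∈ ℝ^{n × n/2^l}`: (using 0-based indices `i, j`, corresponding to
1-based indices `i+1, j+1`) the entry `A^(l)_{i,j}` is `1/2^l` if
`j·2^l ≤ i < (j+1)·2^l` (i.e. 1-based `(j-1)·2^l + 1 ≤ i ≤ j·2^l`) and `0` otherwise. -/
noncomputable def foldA (n l : ℕ) : Matrix (Fin n) (Fin (n / 2 ^ l)) ℝ :=
  Matrix.of fun i j =>
    if (j : ℕ) * 2 ^ l ≤ (i : ℕ) ∧ (i : ℕ) < ((j : ℕ) + 1) * 2 ^ l then (1 : ℝ) / 2 ^ l else 0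

/-- The unfold matrix `E^(l) ∈ ℝ^{n/2^l × n}`: the entry `E^(l)_{i,j}` is `1` if
`i·2^l ≤ j < (i+1)·2^l` (i.e. 1-based `(i-1)·2^l + 1 ≤ j ≤ i·2^l`) and `0` otherwise. -/
def unfoldE (n l : ℕ) : Matrix (Fin (n / 2 ^ l)) (Fin n) ℝ :=
  Matrix.of fun i j =>
    if (i : ℕ) * 2 ^ l ≤ (j : ℕ) ∧ (j : ℕ) < ((i : ℕ) + 1) * 2 ^ l then (1 : ℝ) else 0

/-- The fold-unfold operator `P^(l) = A^(l) E^(l) ∈ ℝ^{n×n}`. -/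
noncomputable def foldP (n l : ℕ) : Matrix (Fin n) (Fin n) ℝ :=
  foldA n l * unfoldE n l

-- Equip matrices with the Frobenius norm.
attribute [local instance] Matrix.frobeniusNormedAddCommGroup Matrix.frobeniusNormedSpace
  Matrix.frobeniusIsBoundedSMul

lemma cond_iff (l j k : ℕ) :
    (j * 2 ^ l ≤ k ∧ k < (j + 1) * 2 ^ l) ↔ k / 2 ^ l = j := by
  have hpos : 0 < 2 ^ l := Nat.pow_pos (by norm_num)
  constructor
  · rintro ⟨h1, h2⟩; exact Nat.div_eq_of_lt_le h1 h2
  · rintro rfl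
    refine ⟨Nat.div_mul_le_self _ _, ?_⟩
    have h := Nat.div_add_mod k (2 ^ l)
    have h2 : k % 2 ^ l < 2 ^ l := Nat.mod_lt _ hpos
    calc k = 2 ^ l * (k / 2 ^ l) + k % 2 ^ l := h.symm
      _ < 2 ^ l * (k / 2 ^ l) + 2 ^ l := by omega
      _ = (k / 2 ^ l + 1) * 2 ^ l := by ring

lemma block_lt {n l : ℕ} (hdvd : 2 ^ l ∣ n) (k : Fin n) : (k : ℕ) / 2 ^ l < n / 2 ^ l :=
  Nat.div_lt_div_of_lt_of_dvd hdvd k.isLt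

lemma foldP_apply (n l : ℕ) (hdvd : 2 ^ l ∣ n) (k k' : Fin n) :
    foldP n l k k' = if (k : ℕ) / 2 ^ l = (k' : ℕ) / 2 ^ l then (1 : ℝ) / 2 ^ l else 0 := by
  classical
  unfold foldP foldA unfoldE
  rw [Matrix.mul_apply]
  simp only [Matrix.of_apply, cond_iff]
  rw [Finset.sum_eq_single (⟨(k : ℕ) / 2 ^ l, block_lt hdvd k⟩ : Fin (n / 2 ^ l))]
  · have hc : (((⟨(k : ℕ) / 2 ^ l, block_lt hdvd k⟩ : Fin (n / 2 ^ l))) : ℕ)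
        = (k : ℕ) / 2 ^ l := rfl
    simp only [hc]
    simp only [if_true]
    by_cases h : (k : ℕ) / 2 ^ l = (k' : ℕ) / 2 ^ l
    · rw [if_pos h.symm, if_pos h, mul_one]
    · rw [if_neg (fun hh => h hh.symm), if_neg h, mul_zero]
  · intro j _ hj
    have : (k : ℕ) / 2 ^ l ≠ (j : ℕ) := by
      intro h; apply hj; exact Fin.ext h.symm
    simp [this]
  · intro h; exact absurd (Finset.mem_univ _) h

lemma mulP_norm_le {m n l : ℕ} (hdvd : 2 ^ l ∣ n) (X : Matrix (Fin m) (Fin n) ℝ) :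
    ‖X * foldP n l‖ ≤ ‖X‖ := by
  classical
  have hpos : (0 : ℝ) < 2 ^ l := by positivity
  set blk : Fin n → Fin (n / 2 ^ l) := fun k => ⟨(k : ℕ) / 2 ^ l, block_lt hdvd k⟩ with hblk
  -- fiber cardinality bound
  have hcard : ∀ j : Fin (n / 2 ^ l),
      (Finset.univ.filter (fun k : Fin n => blk k = j)).card ≤ 2 ^ l := by
    intro j
    have := Finset.card_le_card_of_injOn (fun k : Fin n => (k : ℕ) % 2 ^ l)
      (s := Finset.univ.filter (fun k : Fin n => blk k = j)) (t := Finset.range (2 ^ l))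
      (fun k _ => Finset.mem_range.mpr (Nat.mod_lt _ (Nat.pow_pos (by norm_num))))
      (by
        intro a ha b hb hab
        simp only [Finset.coe_filter, Set.mem_setOf_eq] at ha hb
        have hva : (a : ℕ) / 2 ^ l = (j : ℕ) := congrArg Fin.val ha.2
        have hvb : (b : ℕ) / 2 ^ l = (j : ℕ) := congrArg Fin.val hb.2
        have hma : (a : ℕ) % 2 ^ l = (b : ℕ) % 2 ^ l := hab
        refine Fin.ext ?_
        calc (a : ℕ) = 2 ^ l * ((a : ℕ) / 2 ^ l) + (a : ℕ) % 2 ^ l :=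
              (Nat.div_add_mod (a : ℕ) (2 ^ l)).symm
          _ = 2 ^ l * ((b : ℕ) / 2 ^ l) + (b : ℕ) % 2 ^ l := by rw [hva, hvb, hma]
          _ = (b : ℕ) := Nat.div_add_mod (b : ℕ) (2 ^ l))
    simpa using this
  -- per-row bound
  have key : ∀ i : Fin m, ∑ k, ((X * foldP n l) i k) ^ 2 ≤ ∑ k, (X i k) ^ 2 := by
    intro i
    set T : Fin (n / 2 ^ l) → ℝ :=
      fun j => ∑ k' ∈ Finset.univ.filter (fun k' : Fin n => blk k' = j), X i k' with hT
    have hentry : ∀ k : Fin n, (X * foldP n l) i k = T (blk k) / 2 ^ l := by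
      intro k
      rw [Matrix.mul_apply]
      have : ∀ k' : Fin n, X i k' * foldP n l k' k
          = (if blk k' = blk k then X i k' else 0) / 2 ^ l := by
        intro k'
        rw [foldP_apply n l hdvd]
        by_cases h : (k' : ℕ) / 2 ^ l = (k : ℕ) / 2 ^ l
        · rw [if_pos h, if_pos (Fin.ext h), mul_one_div]
        · rw [if_neg h, if_neg (fun hh => h (congrArg Fin.val hh)), mul_zero, zero_div]
      simp_rw [this]
      rw [← Finset.sum_div]
      congr 1
      exact (Finset.sum_filter _ _).symm
    calc ∑ k, ((X * foldP n l) i k) ^ 2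
        = ∑ k, (T (blk k) / 2 ^ l) ^ 2 := by simp_rw [hentry]
      _ = ∑ j, ∑ k ∈ Finset.univ.filter (fun k : Fin n => blk k = j),
            (T (blk k) / 2 ^ l) ^ 2 :=
          (Finset.sum_fiberwise _ _ _).symm
      _ ≤ ∑ j, ∑ k ∈ Finset.univ.filter (fun k : Fin n => blk k = j), (X i k) ^ 2 := by
          apply Finset.sum_le_sum
          intro j _
          have hconst : ∀ k ∈ Finset.univ.filter (fun k : Fin n => blk k = j),
              (T (blk k) / 2 ^ l) ^ 2 = (T j / 2 ^ l) ^ 2 := by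
            intro k hk
            rw [(Finset.mem_filter.mp hk).2]
          rw [Finset.sum_congr rfl hconst, Finset.sum_const, nsmul_eq_mul]
          have hCS : (T j) ^ 2 ≤ (2 ^ l : ℝ) *
              ∑ k ∈ Finset.univ.filter (fun k : Fin n => blk k = j), (X i k) ^ 2 := by
            refine le_trans (sq_sum_le_card_mul_sum_sq) ?_
            apply mul_le_mul_of_nonneg_right _ (Finset.sum_nonneg fun _ _ => sq_nonneg _)
            exact_mod_cast hcard j
          have hc2 : ((Finset.univ.filter (fun k : Fin n => blk k = j)).card : ℝ)
              ≤ (2 ^ l : ℝ) := by exact_mod_cast hcard j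
          calc ((Finset.univ.filter (fun k : Fin n => blk k = j)).card : ℝ)
                * (T j / 2 ^ l) ^ 2
              ≤ (2 ^ l : ℝ) * (T j / 2 ^ l) ^ 2 :=
                mul_le_mul_of_nonneg_right hc2 (sq_nonneg _)
            _ = (T j) ^ 2 / 2 ^ l := by field_simp
            _ ≤ ∑ k ∈ Finset.univ.filter (fun k : Fin n => blk k = j), (X i k) ^ 2 := by
                rw [div_le_iff₀ hpos]
                calc (T j) ^ 2 ≤ (2 ^ l : ℝ) * ∑ k ∈ Finset.univ.filter
                      (fun k : Fin n => blk k = j), (X i k) ^ 2 := hCS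
                  _ = _ := mul_comm _ _
      _ = ∑ k, (X i k) ^ 2 := Finset.sum_fiberwise _ _ _
  -- conclude for the Frobenius norm
  rw [Matrix.frobenius_norm_def, Matrix.frobenius_norm_def]
  apply Real.rpow_le_rpow (by positivity) _ (by norm_num)
  simp_rw [show ((2 : ℝ)) = ((2 : ℕ) : ℝ) by norm_num, Real.rpow_natCast]
  apply Finset.sum_le_sum
  intro i _
  simpa [Real.norm_eq_abs, sq_abs] using key i

/-- Bound on the reconstructed first moment: if `‖G_s‖ ≤ C` and
`‖G_s (I − P^(l))‖ ≤ δ ‖G_s‖` for all `s` (Frobenius norm), then with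
`G̃_s = G_s A^(l)`, `M̃_0 = 0`, `M̃_s = β₁ M̃_{s−1} + (1−β₁) G̃_s`,
`R_u = G_u − G̃_u E^(l)`, `M_u = M̃_u E^(l) + R_u`, we have `‖M_u‖ ≤ (1+δ) C`
for every `u ≥ 1`. -/
theorem foam_first_moment_bound {m : ℕ} (n l : ℕ) (hn : 0 < n) (hl : 0 < l)
    (hdvd : 2 ^ l ∣ n) (β₁ : ℝ) (hβ₁ : β₁ ∈ Set.Ico (0 : ℝ) 1)
    (C δ : ℝ) (hC : 0 ≤ C) (hδ : δ ∈ Set.Icc (0 : ℝ) 1)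
    (G : ℕ → Matrix (Fin m) (Fin n) ℝ)
    (hGC : ∀ s, ‖G s‖ ≤ C)
    (hGδ : ∀ s, ‖G s * ((1 : Matrix (Fin n) (Fin n) ℝ) - foldP n l)‖ ≤ δ * ‖G s‖)
    (Gtil : ℕ → Matrix (Fin m) (Fin (n / 2 ^ l)) ℝ)
    (hGtil : ∀ s, Gtil s = G s * foldA n l)
    (Mtil : ℕ → Matrix (Fin m) (Fin (n / 2 ^ l)) ℝ)
    (hMtil0 : Mtil 0 = 0)
    (hMtilrec : ∀ s, 1 ≤ s → Mtil s = β₁ • Mtil (s - 1) + (1 - β₁) • Gtil s)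
    (R : ℕ → Matrix (Fin m) (Fin n) ℝ)
    (hR : ∀ s, R s = G s - Gtil s * unfoldE n l)
    (M : ℕ → Matrix (Fin m) (Fin n) ℝ)
    (hM : ∀ s, M s = Mtil s * unfoldE n l + R s)
    (u : ℕ) (hu : 1 ≤ u) :
    ‖M u‖ ≤ (1 + δ) * C := by
  obtain ⟨hβ0, hβlt⟩ := hβ₁
  have hPE : ∀ s, Gtil s * unfoldE n l = G s * foldP n l := by
    intro s
    rw [hGtil, foldP, ← Matrix.mul_assoc]
  have hGP : ∀ s, ‖Gtil s * unfoldE n l‖ ≤ C := by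
    intro s
    rw [hPE]
    exact (mulP_norm_le hdvd _).trans (hGC s)
  have hME : ∀ s, ‖Mtil s * unfoldE n l‖ ≤ C := by
    intro s
    induction s with
    | zero => rw [hMtil0, Matrix.zero_mul, norm_zero]; exact hC
    | succ t ih =>
      rw [hMtilrec (t + 1) (Nat.le_add_left 1 t), Nat.add_sub_cancel,
        Matrix.add_mul, Matrix.smul_mul, Matrix.smul_mul]
      calc ‖β₁ • (Mtil t * unfoldE n l) + (1 - β₁) • (Gtil (t + 1) * unfoldE n l)‖
          ≤ ‖β₁ • (Mtil t * unfoldE n l)‖ + ‖(1 - β₁) • (Gtil (t + 1) * unfoldE n l)‖ :=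
            norm_add_le _ _
        _ = β₁ * ‖Mtil t * unfoldE n l‖ + (1 - β₁) * ‖Gtil (t + 1) * unfoldE n l‖ := by
            rw [norm_smul, norm_smul, Real.norm_eq_abs, Real.norm_eq_abs,
              abs_of_nonneg hβ0, abs_of_nonneg (by linarith)]
        _ ≤ β₁ * C + (1 - β₁) * C :=
            add_le_add (mul_le_mul_of_nonneg_left ih hβ0)
              (mul_le_mul_of_nonneg_left (hGP (t + 1)) (by linarith))
        _ = C := by ring
  have hRu : ‖R u‖ ≤ δ * C := by
    have hRe : R u = G u * ((1 : Matrix (Fin n) (Fin n) ℝ) - foldP n l) := by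
      rw [hR, Matrix.mul_sub, Matrix.mul_one, hPE]
    rw [hRe]
    exact (hGδ u).trans (mul_le_mul_of_nonneg_left (hGC u) hδ.1)
  rw [hM]
  calc ‖Mtil u * unfoldE n l + R u‖ ≤ ‖Mtil u * unfoldE n l‖ + ‖R u‖ := norm_add_le _ _
    _ ≤ C + δ * C := add_le_add (hME u) hRu
    _ = (1 + δ) * C := by ring
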